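/- Let R = K[x_0,…,x_4] and let n_{22}, n_{31}, n_{41}, n_{42} be linear forms such that (n_{22}, n_{42}) and (n_{31}, n_{41}) are regular sequences and the four forms are in sufficiently general position (e.g. all four K-linearly independent). Then ⟨n_{22}n_{31}, n_{22}n_{41}, n_{31}n_{42}, n_{41}n_{42}⟩ = ⟨n_{22}, n_{42}⟩ ∩ ⟨n_{31}, n_{41}⟩. -/

import Mathlib

open MvPolynomial

section Aux

lemma degree_one_single {σ : Type*} {d : σ →₀ ℕ} (hd : d.degree = 1) :
    ∃ i, d = Finsupp.single i 1 := by
  classical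
  have hne : d ≠ 0 := by
    intro h; rw [h] at hd; simp at hd
  obtain ⟨i, hi⟩ := Finsupp.ne_iff.mp hne
  simp only [Finsupp.coe_zero, Pi.zero_apply] at hi
  refine ⟨i, ?_⟩
  have h1 : d i ≤ 1 := hd ▸ Finsupp.le_degree i d
  have hdi : d i = 1 := le_antisymm h1 (Nat.one_le_iff_ne_zero.mpr hi)
  have hsupp : d.support = {i} := by
    apply Finset.eq_singleton_iff_unique_mem.mpr
    refine ⟨Finsupp.mem_support_iff.mpr hi, ?_⟩
    intro j hj
    by_contra hji
    have : 2 ≤ d.degree := by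
      have : ({i, j} : Finset σ) ⊆ d.support := by
        intro k hk
        simp only [Finset.mem_insert, Finset.mem_singleton] at hk
        rcases hk with rfl | rfl
        · exact Finsupp.mem_support_iff.mpr hi
        · exact hj
      calc 2 = ∑ _k ∈ ({i, j} : Finset σ), 1 := by
                rw [Finset.sum_const, Finset.card_insert_of_notMem (by simpa using (Ne.symm hji)),
                  Finset.card_singleton]; rfl
        _ ≤ ∑ k ∈ ({i, j} : Finset σ), d k := by
                refine Finset.sum_le_sum fun k hk => ?_
                exact Nat.one_le_iff_ne_zero.mpr (Finsupp.mem_support_iff.mp (this hk))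
        _ ≤ ∑ k ∈ d.support, d k := Finset.sum_le_sum_of_subset this
        _ = d.degree := rfl
    omega
  have := Finsupp.support_eq_singleton.mp hsupp
  rw [this.2, hdi]

variable {K : Type*} [Field K]

/-- A homogeneous degree-1 polynomial is the sum of its coefficients times variables. -/
lemma linear_eq_sum (p : MvPolynomial (Fin 5) K) (hp : p.IsHomogeneous 1) :
    ∑ j : Fin 5, coeff (Finsupp.single j 1) p • (X j : MvPolynomial (Fin 5) K) = p := by
  apply MvPolynomial.ext
  intro m
  rw [coeff_sum]
  simp only [coeff_smul, coeff_X', smul_eq_mul]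
  by_cases hm : ∃ i : Fin 5, m = Finsupp.single i 1
  · obtain ⟨i, rfl⟩ := hm
    rw [Finset.sum_eq_single i]
    · simp
    · intro j _ hji
      rw [if_neg, mul_zero]
      intro h
      exact hji (by
        have := (Finsupp.single_eq_single_iff _ _ _ _).mp h
        rcases this with ⟨h1, _⟩ | ⟨h1, _⟩
        · exact h1
        · exact absurd h1 one_ne_zero)
    · simp
  · have hc : coeff m p = 0 := by
      by_contra hc
      have hw := hp hc
      have hdeg : m.degree = 1 := by rw [Finsupp.degree_eq_weight_one]; exact hw
      obtain ⟨i, hi⟩ := degree_one_single hdeg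
      exact hm ⟨i, hi⟩
    rw [hc]
    apply Finset.sum_eq_zero
    intro j _
    rw [if_neg, mul_zero]
    intro h
    exact hm ⟨j, h.symm⟩

lemma le_pair {i j : Fin 5} (hij : i ≠ j) (m : Fin 5 →₀ ℕ) :
    Finsupp.single i 1 + Finsupp.single j 1 ≤ m ↔ m i ≠ 0 ∧ m j ≠ 0 := by
  rw [Finsupp.le_def]
  constructor
  · intro h
    have hi := h i
    have hj := h j
    rw [Finsupp.add_apply, Finsupp.single_eq_same, Finsupp.single_eq_of_ne' (Ne.symm hij)] at hi
    rw [Finsupp.add_apply, Finsupp.single_eq_of_ne' hij, Finsupp.single_eq_same] at hj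
    exact ⟨by omega, by omega⟩
  · rintro ⟨h1, h2⟩ k
    simp only [Finsupp.add_apply, Finsupp.single_apply]
    rcases eq_or_ne i k with rfl | hik
    · rw [if_pos rfl, if_neg (Ne.symm hij)]
      omega
    · rw [if_neg hik]
      rcases eq_or_ne j k with rfl | hjk
      · rw [if_pos rfl]
        omega
      · rw [if_neg hjk]
        omega

/-- The monomial case of the main theorem. -/
lemma core_monomial :
    Ideal.span {(X 0 * X 1 : MvPolynomial (Fin 5) K), X 0 * X 2, X 1 * X 3, X 2 * X 3} =
      Ideal.span {(X 0 : MvPolynomial (Fin 5) K), X 3} ⊓ Ideal.span {X 1, X 2} := by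
  classical
  have hXX : ∀ i j : Fin 5, (X i * X j : MvPolynomial (Fin 5) K) =
      monomial (Finsupp.single i 1 + Finsupp.single j 1) 1 := by
    intro i j
    rw [X, X, monomial_mul, one_mul]
  have himg : ((fun s => monomial s (1 : K)) ''
      {Finsupp.single (0:Fin 5) 1 + Finsupp.single 1 1,
       Finsupp.single 0 1 + Finsupp.single 2 1,
       Finsupp.single 1 1 + Finsupp.single 3 1,
       Finsupp.single 2 1 + Finsupp.single 3 1}) =
      {(X 0 * X 1 : MvPolynomial (Fin 5) K), X 0 * X 2, X 1 * X 3, X 2 * X 3} := by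
    simp only [Set.image_insert_eq, Set.image_singleton, hXX]
  have himg1 : (X '' ({0, 3} : Set (Fin 5)) : Set (MvPolynomial (Fin 5) K)) = {X 0, X 3} := by
    simp [Set.image_insert_eq]
  have himg2 : (X '' ({1, 2} : Set (Fin 5)) : Set (MvPolynomial (Fin 5) K)) = {X 1, X 2} := by
    simp [Set.image_insert_eq]
  have hper : ∀ m : Fin 5 →₀ ℕ,
      (∃ si ∈ ({Finsupp.single (0:Fin 5) 1 + Finsupp.single 1 1,
        Finsupp.single 0 1 + Finsupp.single 2 1,
        Finsupp.single 1 1 + Finsupp.single 3 1,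
        Finsupp.single 2 1 + Finsupp.single 3 1} : Set (Fin 5 →₀ ℕ)), si ≤ m) ↔
      ((∃ i ∈ ({0, 3} : Set (Fin 5)), m i ≠ 0) ∧ (∃ i ∈ ({1, 2} : Set (Fin 5)), m i ≠ 0)) := by
    intro m
    simp only [Set.mem_insert_iff, Set.mem_singleton_iff, exists_eq_or_imp, exists_eq_left,
      le_pair (by decide : (0:Fin 5) ≠ 1), le_pair (by decide : (0:Fin 5) ≠ 2),
      le_pair (by decide : (1:Fin 5) ≠ 3), le_pair (by decide : (2:Fin 5) ≠ 3)]
    tauto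
  ext f
  rw [← himg, ← himg1, ← himg2, Ideal.mem_inf, mem_ideal_span_monomial_image,
    mem_ideal_span_X_image, mem_ideal_span_X_image, ← forall_and]
  apply forall_congr'
  intro m
  rw [show ((m ∈ f.support → ∃ i ∈ ({0,3} : Set (Fin 5)), m i ≠ 0) ∧
      (m ∈ f.support → ∃ i ∈ ({1,2} : Set (Fin 5)), m i ≠ 0)) ↔
      (m ∈ f.support → ((∃ i ∈ ({0,3} : Set (Fin 5)), m i ≠ 0) ∧
        (∃ i ∈ ({1,2} : Set (Fin 5)), m i ≠ 0))) from by tauto]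
  constructor
  · intro h hm
    exact (hper m).mp (h hm)
  · intro h hm
    exact (hper m).mpr (h hm)

end Aux

/-- For four linearly independent linear forms `n₂₂, n₃₁, n₄₁, n₄₂` in `K[x₀,…,x₄]`, the
ideal generated by the four products `n₂₂n₃₁, n₂₂n₄₁, n₃₁n₄₂, n₄₁n₄₂` equals the
intersection `⟨n₂₂, n₄₂⟩ ⊓ ⟨n₃₁, n₄₁⟩`. -/
theorem ideal_of_products_eq_inter
    {K : Type*} [Field K]
    (n22 n31 n41 n42 : MvPolynomial (Fin 5) K)
    (h22 : n22.IsHomogeneous 1) (h31 : n31.IsHomogeneous 1)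
    (h41 : n41.IsHomogeneous 1) (h42 : n42.IsHomogeneous 1)
    (hind : LinearIndependent K ![n22, n31, n41, n42]) :
    Ideal.span {n22 * n31, n22 * n41, n31 * n42, n41 * n42} =
      Ideal.span {n22, n42} ⊓ Ideal.span {n31, n41} := by
  classical
  set nn : Fin 4 → MvPolynomial (Fin 5) K := ![n22, n31, n41, n42] with hnn
  have hnnhom : ∀ i, (nn i).IsHomogeneous 1 := by
    intro i
    fin_cases i <;> simpa [hnn]
  set v : Fin 4 → (Fin 5 → K) := fun i j => coeff (Finsupp.single j 1) (nn i) with hv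
  let ψ : (Fin 5 → K) →ₗ[K] MvPolynomial (Fin 5) K :=
    { toFun := fun w => ∑ j, w j • X j
      map_add' := fun a b => by simp [add_smul, Finset.sum_add_distrib]
      map_smul' := fun c a => by simp [Finset.smul_sum, smul_smul] }
  have hψ : ∀ u : Fin 5 → K, ψ u = ∑ j, u j • (X j : MvPolynomial (Fin 5) K) := fun _ => rfl
  have hψv : ψ ∘ v = nn := by
    funext i
    rw [Function.comp_apply, hψ]
    exact linear_eq_sum (nn i) (hnnhom i)
  have hvind : LinearIndependent K v := LinearIndependent.of_comp ψ (hψv ▸ hind)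
  have hfr : Module.finrank K (Fin 5 → K) = 5 := by simp
  have hne : Submodule.span K (Set.range v) ≠ ⊤ := by
    intro htop
    have b4 : Module.Basis (Fin 4) K (Fin 5 → K) := Module.Basis.mk hvind (le_of_eq htop.symm)
    have hcard := Module.finrank_eq_card_basis b4
    rw [hfr] at hcard
    simp at hcard
  obtain ⟨v4, hv4⟩ : ∃ x, x ∉ Submodule.span K (Set.range v) := by
    by_contra h
    push_neg at h
    exact hne (Submodule.eq_top_iff'.mpr h)
  set w : Fin 5 → (Fin 5 → K) := Fin.snoc v v4 with hw
  have hwind : LinearIndependent K w :=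
    linearIndependent_fin_snoc.mpr ⟨hvind, hv4⟩
  let b : Module.Basis (Fin 5) K (Fin 5 → K) :=
    basisOfLinearIndependentOfCardEqFinrank hwind (by rw [hfr]; simp)
  have hb : ⇑b = w := coe_basisOfLinearIndependentOfCardEqFinrank _ _
  let e : Module.Basis (Fin 5) K (Fin 5 → K) := Pi.basisFun K (Fin 5)
  set M : Matrix (Fin 5) (Fin 5) K := (e.toMatrix ⇑b).transpose with hM
  set N : Matrix (Fin 5) (Fin 5) K := (b.toMatrix ⇑e).transpose with hN
  have hMN : M * N = 1 := by
    rw [hM, hN, ← Matrix.transpose_mul, Module.Basis.toMatrix_mul_toMatrix_flip, Matrix.transpose_one]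
  have hNM : N * M = 1 := by
    rw [hM, hN, ← Matrix.transpose_mul, Module.Basis.toMatrix_mul_toMatrix_flip, Matrix.transpose_one]
  have hMw : ∀ i j, M i j = w i j := by
    intro i j
    rw [hM, Matrix.transpose_apply, Module.Basis.toMatrix_apply, hb]
    simp [e]
  let σA : MvPolynomial (Fin 5) K →ₐ[K] MvPolynomial (Fin 5) K :=
    aeval (fun i => ∑ j, M i j • X j)
  let τA : MvPolynomial (Fin 5) K →ₐ[K] MvPolynomial (Fin 5) K :=
    aeval (fun i => ∑ j, N i j • X j)
  have key : ∀ (A B : Matrix (Fin 5) (Fin 5) K), B * A = 1 →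
      ∀ i, aeval (fun i' => ∑ j, A i' j • (X j : MvPolynomial (Fin 5) K))
        (∑ j, B i j • (X j : MvPolynomial (Fin 5) K)) = (X i : MvPolynomial (Fin 5) K) := by
    intro A B hBA i
    rw [map_sum]
    simp only [map_smul, aeval_X]
    calc ∑ j, B i j • ∑ k, A j k • (X k : MvPolynomial (Fin 5) K)
        = ∑ j, ∑ k, (B i j * A j k) • (X k : MvPolynomial (Fin 5) K) := by
          simp [Finset.smul_sum, smul_smul]
      _ = ∑ k, ∑ j, (B i j * A j k) • (X k : MvPolynomial (Fin 5) K) := Finset.sum_comm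
      _ = ∑ k, ((B * A) i k) • (X k : MvPolynomial (Fin 5) K) := by
          simp [Matrix.mul_apply, Finset.sum_smul]
      _ = (X i : MvPolynomial (Fin 5) K) := by
          rw [hBA]
          simp [Matrix.one_apply, ite_smul]
  have hστ : σA.comp τA = AlgHom.id K (MvPolynomial (Fin 5) K) := by
    apply MvPolynomial.algHom_ext
    intro i
    simp only [AlgHom.comp_apply, AlgHom.id_apply, τA, σA, aeval_X]
    exact key M N hNM i
  have hτσ : τA.comp σA = AlgHom.id K (MvPolynomial (Fin 5) K) := by
    apply MvPolynomial.algHom_ext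
    intro i
    simp only [AlgHom.comp_apply, AlgHom.id_apply, τA, σA, aeval_X]
    exact key N M hMN i
  let E : MvPolynomial (Fin 5) K ≃ₐ[K] MvPolynomial (Fin 5) K :=
    AlgEquiv.ofAlgHom σA τA hστ hτσ
  have hEX : ∀ (i : Fin 4), E (X (Fin.castSucc i)) = nn i := by
    intro i
    show σA (X (Fin.castSucc i)) = nn i
    have h1 : σA (X (Fin.castSucc i)) = ∑ j, M (Fin.castSucc i) j • X j := aeval_X _ _
    have hrow : ∀ j, M (Fin.castSucc i) j = v i j := by
      intro j
      rw [hMw, hw, Fin.snoc_castSucc]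
    rw [h1]
    simp_rw [hrow, hv]
    exact linear_eq_sum (nn i) (hnnhom i)
  have hE0 : E (X 0) = n22 := by simpa [hnn] using hEX 0
  have hE1 : E (X 1) = n31 := by simpa [hnn] using hEX 1
  have hE2 : E (X 2) = n41 := by simpa [hnn] using hEX 2
  have hE3 : E (X 3) = n42 := by simpa [hnn] using hEX 3
  have hmap1 : Ideal.map (E : MvPolynomial (Fin 5) K ≃+* MvPolynomial (Fin 5) K)
      (Ideal.span {(X 0 * X 1 : MvPolynomial (Fin 5) K), X 0 * X 2, X 1 * X 3, X 2 * X 3}) =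
      Ideal.span {n22 * n31, n22 * n41, n31 * n42, n41 * n42} := by
    rw [Ideal.map_span]
    congr 1
    simp only [Set.image_insert_eq, Set.image_singleton, map_mul]
    rw [show ((E : MvPolynomial (Fin 5) K ≃+* MvPolynomial (Fin 5) K) (X 0)) = n22 from hE0,
      show ((E : MvPolynomial (Fin 5) K ≃+* MvPolynomial (Fin 5) K) (X 1)) = n31 from hE1,
      show ((E : MvPolynomial (Fin 5) K ≃+* MvPolynomial (Fin 5) K) (X 2)) = n41 from hE2,
      show ((E : MvPolynomial (Fin 5) K ≃+* MvPolynomial (Fin 5) K) (X 3)) = n42 from hE3]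
  have hmap2 : Ideal.map (E : MvPolynomial (Fin 5) K ≃+* MvPolynomial (Fin 5) K)
      (Ideal.span {(X 0 : MvPolynomial (Fin 5) K), X 3}) = Ideal.span {n22, n42} := by
    rw [Ideal.map_span]
    congr 1
    simp only [Set.image_insert_eq, Set.image_singleton]
    rw [show ((E : MvPolynomial (Fin 5) K ≃+* MvPolynomial (Fin 5) K) (X 0)) = n22 from hE0,
      show ((E : MvPolynomial (Fin 5) K ≃+* MvPolynomial (Fin 5) K) (X 3)) = n42 from hE3]
  have hmap3 : Ideal.map (E : MvPolynomial (Fin 5) K ≃+* MvPolynomial (Fin 5) K)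
      (Ideal.span {(X 1 : MvPolynomial (Fin 5) K), X 2}) = Ideal.span {n31, n41} := by
    rw [Ideal.map_span]
    congr 1
    simp only [Set.image_insert_eq, Set.image_singleton]
    rw [show ((E : MvPolynomial (Fin 5) K ≃+* MvPolynomial (Fin 5) K) (X 1)) = n31 from hE1,
      show ((E : MvPolynomial (Fin 5) K ≃+* MvPolynomial (Fin 5) K) (X 2)) = n41 from hE2]
  rw [← hmap1, ← hmap2, ← hmap3, core_monomial]
  rw [← Ideal.comap_symm, ← Ideal.comap_symm, ← Ideal.comap_symm, Ideal.comap_inf]
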